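/- arXiv:2305.17272 — 5 statements merged into one kernel-verified Lean document; each statement's English description precedes it below -/
import Mathlib

section
/- If C_k is a sequence of nonempty closed convex subsets of ℝ^{n+1} such that the distance functions d_{C_k} converge pointwise to a function f, then f equals the distance function d_C of the closed convex set C = f⁻¹({0}), and the convergence is uniform on bounded sets. -/
open Metric Filter Set

theorem stmt_1 {n : ℕ} (C : ℕ → Set (EuclideanSpace ℝ (Fin (n + 1))))
    (hne : ∀ k, (C k).Nonempty) (hcl : ∀ k, IsClosed (C k)) (hconv : ∀ k, Convex ℝ (C k))
    (f : EuclideanSpace ℝ (Fin (n + 1)) → ℝ)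
    (hf : ∀ x, Filter.Tendsto (fun k => Metric.infDist x (C k)) Filter.atTop (nhds (f x))) :
    (f = fun x => Metric.infDist x (f ⁻¹' {0})) ∧
      ∀ s : Set (EuclideanSpace ℝ (Fin (n + 1))), Bornology.IsBounded s →
        TendstoUniformlyOn (fun k x => Metric.infDist x (C k)) f Filter.atTop s := by
  -- f is nonnegative
  have hnn : ∀ x, 0 ≤ f x := fun x =>
    le_of_tendsto_of_tendsto' tendsto_const_nhds (hf x) fun k => Metric.infDist_nonneg
  -- f is 1-Lipschitz (one-sided form)
  have hlip : ∀ x y, f x ≤ f y + dist x y := by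
    intro x y
    exact le_of_tendsto_of_tendsto' (hf x) ((hf y).add tendsto_const_nhds)
      fun k => Metric.infDist_le_infDist_add_dist
  have hdistf : ∀ x y, dist (f x) (f y) ≤ dist x y := by
    intro x y
    rw [Real.dist_eq, abs_sub_le_iff]
    constructor
    · linarith [hlip x y]
    · have := hlip y x; rw [dist_comm y x] at this; linarith
  -- key: the value f x is attained as distance to a zero of f
  have key : ∀ x, ∃ q, f q = 0 ∧ dist x q = f x := by
    intro x
    choose p hpmem hpd using fun k => (hcl k).exists_infDist_eq_dist (hne k) x
    obtain ⟨R, hR⟩ : BddAbove (Set.range fun k => Metric.infDist x (C k)) :=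
      (hf x).bddAbove_range
    have hpball : ∀ k, p k ∈ Metric.closedBall x R := by
      intro k
      rw [Metric.mem_closedBall, dist_comm, ← hpd k]
      exact hR (Set.mem_range_self k)
    obtain ⟨q, _, φ, hφ, hφt⟩ := (isCompact_closedBall x R).tendsto_subseq hpball
    refine ⟨q, ?_, ?_⟩
    · have h0 : Tendsto (fun j => Metric.infDist q (C (φ j))) atTop (nhds (f q)) :=
        (hf q).comp hφ.tendsto_atTop
      have h1 : Tendsto (fun j => dist q (p (φ j))) atTop (nhds 0) := by
        have := ((tendsto_const_nhds : Tendsto (fun _ : ℕ => q) atTop (nhds q)).dist hφt)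
        simpa using this
      have hle : f q ≤ 0 := le_of_tendsto_of_tendsto' h0 h1
        fun j => Metric.infDist_le_dist_of_mem (hpmem (φ j))
      exact le_antisymm hle (hnn q)
    · have h2 : Tendsto (fun j => dist x (p (φ j))) atTop (nhds (dist x q)) :=
        tendsto_const_nhds.dist hφt
      have h3 : Tendsto (fun j => dist x (p (φ j))) atTop (nhds (f x)) := by
        have := (hf x).comp hφ.tendsto_atTop
        simpa only [Function.comp_def, hpd] using this
      exact tendsto_nhds_unique h2 h3
  constructor
  · funext x
    obtain ⟨q, hq0, hqd⟩ := key x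
    have hqmem : q ∈ f ⁻¹' {0} := hq0
    have hDne : (f ⁻¹' ({0} : Set ℝ)).Nonempty := ⟨q, hqmem⟩
    refine le_antisymm ?_ ?_
    · -- f x ≤ infDist x D, via infEdist
      have h1 : ENNReal.ofReal (f x) ≤ Metric.infEDist x (f ⁻¹' {0}) := by
        rw [EMetric.le_infEdist]
        intro y hy
        have hy0 : f y = 0 := hy
        have : f x ≤ dist x y := by have := hlip x y; rw [hy0] at this; linarith
        rw [edist_dist]
        exact ENNReal.ofReal_le_ofReal this
      have h2 := ENNReal.toReal_mono (Metric.infEdist_ne_top hDne) h1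
      rwa [ENNReal.toReal_ofReal (hnn x)] at h2
    · rw [← hqd]
      exact Metric.infDist_le_dist_of_mem hqmem
  · intro s hs
    rw [Metric.tendstoUniformlyOn_iff]
    intro ε hε
    have hK : IsCompact (closure s) := hs.isCompact_closure
    obtain ⟨t, -, htfin, htcov⟩ := hK.finite_cover_balls (show (0:ℝ) < ε / 3 by linarith)
    have hev : ∀ᶠ k in atTop, ∀ y ∈ t, dist (Metric.infDist y (C k)) (f y) < ε / 3 := by
      rw [eventually_all_finite htfin]
      intro y _
      have := (hf y).eventually (Metric.ball_mem_nhds (f y) (show (0:ℝ) < ε/3 by linarith))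
      simpa [Metric.mem_ball] using this
    filter_upwards [hev] with k hk x hx
    obtain ⟨y, hyt, hxy⟩ : ∃ y ∈ t, x ∈ Metric.ball y (ε / 3) := by
      have := htcov (subset_closure hx)
      simpa using this
    have hxy' : dist x y < ε / 3 := Metric.mem_ball.mp hxy
    have l1 : dist (f x) (f y) ≤ dist x y := hdistf x y
    have l2 : dist (Metric.infDist y (C k)) (f y) < ε / 3 := hk y hyt
    have l3 : dist (Metric.infDist x (C k)) (Metric.infDist y (C k)) ≤ dist x y := by
      rw [Real.dist_eq, abs_sub_le_iff]
      constructor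
      · linarith [Metric.infDist_le_infDist_add_dist (x := x) (y := y) (s := C k)]
      · have := Metric.infDist_le_infDist_add_dist (x := y) (y := x) (s := C k)
        rw [dist_comm y x] at this; linarith
    calc dist (f x) (Metric.infDist x (C k))
        ≤ dist (f x) (f y) + dist (f y) (Metric.infDist y (C k))
            + dist (Metric.infDist y (C k)) (Metric.infDist x (C k)) := dist_triangle4 _ _ _ _
      _ < ε / 3 + ε / 3 + ε / 3 := by
          rw [dist_comm (f y), dist_comm _ (Metric.infDist x (C k))]
          have := l1.trans_lt hxy'
          have := l3.trans_lt hxy'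
          linarith
      _ = ε := by ring
end

section
/- There is a constant c_n (depending only on n) such that for every closed convex set C ⊆ ℝ^{n+1} with nonempty interior and boundary of class such that the n-dimensional Hausdorff measure is defined, and for every R ≥ 1, ∫_{∂C \ B_R(0)} e^{−‖x‖²/4} dH^n ≤ c_n R^n e^{−R²/4}. -/
open MeasureTheory Real InnerProductSpace Set

variable {F : Type*} [NormedAddCommGroup F] [InnerProductSpace ℝ F] [CompleteSpace F]

/-- Nearest point projection onto a nonempty closed convex set. -/
noncomputable def cproj (K : Set F) (hne : K.Nonempty) (hc : IsClosed K) (hconv : Convex ℝ K)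
    (x : F) : F :=
  Classical.choose (exists_norm_eq_iInf_of_complete_convex hne hc.isComplete hconv x)

theorem cproj_mem (K : Set F) (hne : K.Nonempty) (hc : IsClosed K) (hconv : Convex ℝ K) (x : F) :
    cproj K hne hc hconv x ∈ K :=
  (Classical.choose_spec (exists_norm_eq_iInf_of_complete_convex hne hc.isComplete hconv x)).1

theorem cproj_inner_le (K : Set F) (hne : K.Nonempty) (hc : IsClosed K) (hconv : Convex ℝ K)
    (x : F) : ∀ z ∈ K, ⟪x - cproj K hne hc hconv x, z - cproj K hne hc hconv x⟫_ℝ ≤ 0 := by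
  have h := (Classical.choose_spec
    (exists_norm_eq_iInf_of_complete_convex hne hc.isComplete hconv x)).2
  exact (norm_eq_iInf_iff_real_inner_le_zero hconv (cproj_mem K hne hc hconv x)).1 h

theorem cproj_unique (K : Set F) (hne : K.Nonempty) (hc : IsClosed K) (hconv : Convex ℝ K)
    {x v : F} (hv : v ∈ K) (h : ∀ z ∈ K, ⟪x - v, z - v⟫_ℝ ≤ 0) :
    cproj K hne hc hconv x = v := by
  set w := cproj K hne hc hconv x with hw
  have h1 := cproj_inner_le K hne hc hconv x v hv
  have h2 := h w (cproj_mem K hne hc hconv x)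
  have : ⟪v - w, v - w⟫_ℝ ≤ 0 := by
    have e1 : ⟪x - w, v - w⟫_ℝ ≤ 0 := h1
    have e2 : ⟪x - v, w - v⟫_ℝ ≤ 0 := h2
    have : ⟪(x - w) - (x - v), v - w⟫_ℝ ≤ 0 := by
      rw [inner_sub_left]
      have : ⟪x - v, v - w⟫_ℝ = - ⟪x - v, w - v⟫_ℝ := by
        rw [show v - w = -(w - v) by abel, inner_neg_right]
      linarith
    have harg : (x - w) - (x - v) = v - w := by abel
    rwa [harg] at this
  have : v - w = 0 := by
    have := real_inner_self_nonneg (x := v - w)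
    have hz : ⟪v - w, v - w⟫_ℝ = 0 := le_antisymm ‹_› ‹_›
    exact inner_self_eq_zero.mp hz
  have : v = w := by rwa [sub_eq_zero] at this
  exact this.symm

theorem cproj_lipschitz (K : Set F) (hne : K.Nonempty) (hc : IsClosed K) (hconv : Convex ℝ K) :
    LipschitzWith 1 (cproj K hne hc hconv) := by
  apply LipschitzWith.of_dist_le_mul
  intro x y
  simp only [NNReal.coe_one, one_mul, dist_eq_norm]
  set px := cproj K hne hc hconv x
  set py := cproj K hne hc hconv y
  have h1 : ⟪x - px, py - px⟫_ℝ ≤ 0 := cproj_inner_le K hne hc hconv x py (cproj_mem K hne hc hconv y)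
  have h2 : ⟪y - py, px - py⟫_ℝ ≤ 0 := cproj_inner_le K hne hc hconv y px (cproj_mem K hne hc hconv x)
  have key : ‖px - py‖ ^ 2 ≤ ⟪x - y, px - py⟫_ℝ := by
    have : ⟪(x - px) - (y - py), py - px⟫_ℝ ≤ 0 := by
      rw [inner_sub_left]
      have : ⟪y - py, py - px⟫_ℝ = - ⟪y - py, px - py⟫_ℝ := by
        rw [show py - px = -(px - py) by abel, inner_neg_right]
      linarith
    have e : ⟪(x - px) - (y - py), py - px⟫_ℝ
        = ⟪x - y, py - px⟫_ℝ - ⟪px - py, py - px⟫_ℝ := by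
      rw [← inner_sub_left]; congr 1; abel
    have e2 : ⟪px - py, py - px⟫_ℝ = - ‖px - py‖ ^ 2 := by
      have : (py - px) = -(px - py) := by abel
      rw [this, inner_neg_right, real_inner_self_eq_norm_sq]
    have e3 : ⟪x - y, py - px⟫_ℝ = - ⟪x - y, px - py⟫_ℝ := by
      rw [show py - px = -(px - py) by abel, inner_neg_right]
    rw [e, e2, e3] at this
    linarith
  rcases eq_or_ne px py with h | h
  · simp [h, norm_nonneg]
  · have hpos : 0 < ‖px - py‖ := by
      rw [norm_pos_iff]; exact sub_ne_zero.mpr h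
    have := key.trans (real_inner_le_norm (x - y) (px - py))
    nlinarith

theorem cproj_self (K : Set F) (hne : K.Nonempty) (hc : IsClosed K) (hconv : Convex ℝ K)
    {x : F} (hx : x ∈ K) : cproj K hne hc hconv x = x :=
  cproj_unique K hne hc hconv hx (fun z hz => by simp)

theorem cproj_ray (K : Set F) (hne : K.Nonempty) (hc : IsClosed K) (hconv : Convex ℝ K)
    (x : F) {s : ℝ} (hs : 0 ≤ s) :
    cproj K hne hc hconv (cproj K hne hc hconv x
      + s • (x - cproj K hne hc hconv x)) = cproj K hne hc hconv x := by
  set px := cproj K hne hc hconv x with hpx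
  apply cproj_unique K hne hc hconv (cproj_mem K hne hc hconv x)
  intro z hz
  have : px + s • (x - px) - px = s • (x - px) := by abel
  rw [this, real_inner_smul_left]
  exact mul_nonpos_of_nonneg_of_nonpos hs (cproj_inner_le K hne hc hconv x z hz)

open ENNReal in
theorem face_bound (n : ℕ) (i : Fin (n + 1)) (a ρ : ℝ) (hρ : 0 ≤ ρ) :
    μH[(n : ℝ)] {x : EuclideanSpace ℝ (Fin (n + 1)) | x i = a ∧ ∀ j, |x j| ≤ ρ}
      ≤ ENNReal.ofReal ((Real.sqrt n) ^ n) * ENNReal.ofReal ((2 * ρ) ^ n) := by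
  classical
  set φ : (Fin n → ℝ) → EuclideanSpace ℝ (Fin (n + 1)) :=
    fun y => (WithLp.equiv 2 (Fin (n + 1) → ℝ)).symm (i.insertNth a y) with hφ
  have hlip : LipschitzWith (Real.sqrt n).toNNReal φ := by
    apply LipschitzWith.of_dist_le_mul
    intro y z
    rw [dist_eq_norm, dist_eq_norm]
    have hcoe : ((Real.sqrt n).toNNReal : ℝ) = Real.sqrt n :=
      Real.coe_toNNReal _ (Real.sqrt_nonneg _)
    rw [hcoe]
    have hnorm : ‖φ y - φ z‖ = Real.sqrt (∑ j, ‖(φ y - φ z) j‖ ^ 2) :=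
      EuclideanSpace.norm_eq _
    have happ : ∀ j : Fin (n + 1), (φ y - φ z) j
        = (i.insertNth (α := fun _ => ℝ) a y) j - (i.insertNth (α := fun _ => ℝ) a z) j := by
      intro j; rfl
    have hsum : ∑ j, ‖(φ y - φ z) j‖ ^ 2 ≤ n * ‖y - z‖ ^ 2 := by
      simp only [happ]
      have hrw := Fin.sum_univ_succAbove (fun j =>
        ‖(i.insertNth (α := fun _ => ℝ) a y) j - (i.insertNth (α := fun _ => ℝ) a z) j‖ ^ 2) i
      rw [hrw]
      simp only [Fin.insertNth_apply_same, Fin.insertNth_apply_succAbove, sub_self,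
        norm_zero, ne_eq, zero_pow, zero_add]
      rw [zero_pow (two_ne_zero), zero_add]
      have : ∀ k : Fin n, ‖y k - z k‖ ^ 2 ≤ ‖y - z‖ ^ 2 := by
        intro k
        have h1 : ‖(y - z) k‖ ≤ ‖y - z‖ := norm_le_pi_norm (y - z) k
        have h2 : (y - z) k = y k - z k := rfl
        rw [h2] at h1
        exact pow_le_pow_left₀ (norm_nonneg _) h1 2
      calc ∑ k : Fin n, ‖y k - z k‖ ^ 2 ≤ ∑ _k : Fin n, ‖y - z‖ ^ 2 :=
            Finset.sum_le_sum (fun k _ => this k)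
        _ = n * ‖y - z‖ ^ 2 := by simp [mul_comm]
    rw [hnorm]
    calc Real.sqrt (∑ j, ‖(φ y - φ z) j‖ ^ 2) ≤ Real.sqrt (n * ‖y - z‖ ^ 2) :=
          Real.sqrt_le_sqrt hsum
      _ = Real.sqrt n * ‖y - z‖ := by
          rw [Real.sqrt_mul (Nat.cast_nonneg n), Real.sqrt_sq (norm_nonneg _)]
  -- the face is contained in the image of the cube
  set Q : Set (Fin n → ℝ) := Set.Icc (fun _ => -ρ) (fun _ => ρ) with hQ
  have hsub : {x : EuclideanSpace ℝ (Fin (n + 1)) | x i = a ∧ ∀ j, |x j| ≤ ρ} ⊆ φ '' Q := by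
    rintro x ⟨hxi, hxj⟩
    refine ⟨fun k => x (i.succAbove k), ?_, ?_⟩
    · constructor <;> intro k <;> have := abs_le.1 (hxj (i.succAbove k))
      · exact this.1
      · exact this.2
    · have hins : i.insertNth (α := fun _ => ℝ) a (fun k => x (i.succAbove k)) = fun j => x j := by
        funext j
        by_cases h : j = i
        · rw [h, Fin.insertNth_apply_same, hxi]
        · obtain ⟨k, rfl⟩ := Fin.exists_succAbove_eq h
          rw [Fin.insertNth_apply_succAbove]
      show (WithLp.equiv 2 (Fin (n + 1) → ℝ)).symm (i.insertNth a fun k => x (i.succAbove k)) = x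
      rw [hins]
      rfl
  calc μH[(n : ℝ)] {x : EuclideanSpace ℝ (Fin (n + 1)) | x i = a ∧ ∀ j, |x j| ≤ ρ}
      ≤ μH[(n : ℝ)] (φ '' Q) := measure_mono hsub
    _ ≤ ((Real.sqrt n).toNNReal : ℝ≥0∞) ^ (n : ℝ) * μH[(n : ℝ)] Q :=
        hlip.hausdorffMeasure_image_le (Nat.cast_nonneg n) Q
    _ ≤ ENNReal.ofReal ((Real.sqrt n) ^ n) * ENNReal.ofReal ((2 * ρ) ^ n) := by
        gcongr ?_ * ?_
        · rw [ENNReal.rpow_natCast, ENNReal.ofReal_pow (Real.sqrt_nonneg _)]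
          rfl
        · have hμH : (μH[(n : ℝ)] : Measure (Fin n → ℝ)) = volume := by
            have := MeasureTheory.hausdorffMeasure_pi_real (ι := Fin n)
            rwa [Fintype.card_fin] at this
          rw [hμH, hQ, Real.volume_Icc_pi]
          have : ∀ _j : Fin n, ENNReal.ofReal (ρ - -ρ) = ENNReal.ofReal (2 * ρ) := by
            intro j; congr 1; ring
          rw [Finset.prod_congr rfl (fun j _ => this j), Finset.prod_const,
            ← ENNReal.ofReal_pow (by linarith), Finset.card_univ, Fintype.card_fin]

section Geom

variable {n : ℕ}

local notation "E" => EuclideanSpace ℝ (Fin (n + 1))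

noncomputable def supn (x : EuclideanSpace ℝ (Fin (n + 1))) : ℝ :=
  ‖(WithLp.equiv 2 (Fin (n + 1) → ℝ)) x‖

theorem supn_continuous : Continuous (supn (n := n)) :=
  continuous_norm.comp (PiLp.lipschitzWith_ofLp 2 _).continuous

theorem supn_le_norm (x : E) : supn x ≤ ‖x‖ := by
  have h := (PiLp.lipschitzWith_ofLp 2 (fun _ : Fin (n + 1) => ℝ)).dist_le_mul x 0
  simpa [supn, dist_eq_norm] using h

theorem coord_le_supn (x : EuclideanSpace ℝ (Fin (n + 1))) (j : Fin (n + 1)) :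
    |x j| ≤ supn x := by
  have h := norm_le_pi_norm ((WithLp.equiv 2 (Fin (n + 1) → ℝ)) x) j
  simpa [supn] using h

theorem supn_nonneg (x : E) : 0 ≤ supn x := norm_nonneg _

theorem norm_le_supn (x : E) : ‖x‖ ≤ (n + 1) * supn x := by
  have hn : ‖x‖ = Real.sqrt (∑ j, ‖x j‖ ^ 2) := EuclideanSpace.norm_eq x
  have hsum : ∑ j, ‖x j‖ ^ 2 ≤ (n + 1) * supn x ^ 2 := by
    calc ∑ j, ‖x j‖ ^ 2 ≤ ∑ _j : Fin (n + 1), supn x ^ 2 := by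
          apply Finset.sum_le_sum
          intro j _
          have := coord_le_supn x j
          have h0 : (0 : ℝ) ≤ |x j| := abs_nonneg _
          calc ‖x j‖ ^ 2 = |x j| ^ 2 := by rw [Real.norm_eq_abs]
            _ ≤ supn x ^ 2 := by nlinarith
      _ = (n + 1) * supn x ^ 2 := by
          rw [Finset.sum_const, Finset.card_univ, Fintype.card_fin, nsmul_eq_mul]
          push_cast; ring
  rw [hn]
  calc Real.sqrt (∑ j, ‖x j‖ ^ 2) ≤ Real.sqrt ((n + 1) * supn x ^ 2) := Real.sqrt_le_sqrt hsum
    _ ≤ Real.sqrt (((n + 1) * supn x) ^ 2) := by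
        apply Real.sqrt_le_sqrt
        have h0 := supn_nonneg x
        have : (0:ℝ) ≤ (n:ℝ) := Nat.cast_nonneg n
        nlinarith
    _ = (n + 1) * supn x := Real.sqrt_sq (mul_nonneg (by positivity) (supn_nonneg x))

theorem supn_pos_of_ne_zero {x : E} (hx : x ≠ 0) : 0 < supn x := by
  rw [supn]
  rw [norm_pos_iff]
  intro h
  apply hx
  have : x = (WithLp.equiv 2 (Fin (n + 1) → ℝ)).symm 0 := by
    rw [← h]; rfl
  rw [this]; rfl

end Geom

open ENNReal in
theorem boundary_measure_bound (n : ℕ) (C : Set (EuclideanSpace ℝ (Fin (n + 1))))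
    (hC : IsClosed C) (hconv : Convex ℝ C) (r : ℝ) (hr : 0 < r) :
    μH[(n : ℝ)] (frontier C ∩ Metric.closedBall 0 r)
      ≤ ENNReal.ofReal (2 * (n + 1) * (Real.sqrt n) ^ n * 2 ^ n)
          * ENNReal.ofReal ((r + 1) ^ n) := by
  classical
  rcases Set.eq_empty_or_nonempty (frontier C ∩ Metric.closedBall 0 r) with he | ⟨y₀, hy₀⟩
  · rw [he]; simp
  set K : Set (EuclideanSpace ℝ (Fin (n + 1))) := C ∩ Metric.closedBall 0 r with hK
  have hKne : K.Nonempty := ⟨y₀, ⟨hC.frontier_subset hy₀.1, hy₀.2⟩⟩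
  have hKc : IsClosed K := hC.inter Metric.isClosed_closedBall
  have hKconv : Convex ℝ K := hconv.inter (convex_closedBall 0 r)
  set P := cproj K hKne hKc hKconv with hP
  set A : Set (EuclideanSpace ℝ (Fin (n + 1))) := {x | supn x = r + 1} with hA
  -- Step 1 : the truncated boundary is in the closure of P '' A
  have step1 : frontier C ∩ Metric.closedBall 0 r ⊆ closure (P '' A) := by
    intro y hy
    have hyK : y ∈ K := ⟨hC.frontier_subset hy.1, hy.2⟩
    rw [Metric.mem_closure_iff]
    intro ε hε
    have hyc : y ∈ closure Cᶜ := by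
      have := hy.1
      rw [frontier_eq_closure_inter_closure] at this
      exact this.2
    rw [Metric.mem_closure_iff] at hyc
    obtain ⟨x, hxC, hdist⟩ := hyc ε hε
    have hxK : x ∉ K := fun h => hxC h.1
    set px := P x with hpx
    have hpxK : px ∈ K := cproj_mem K hKne hKc hKconv x
    set d := x - px with hd
    have hdne : d ≠ 0 := by
      rw [hd, sub_ne_zero]
      intro h
      exact hxK (h ▸ hpxK)
    have hdpos : 0 < supn d := supn_pos_of_ne_zero hdne
    set g : ℝ → ℝ := fun s => supn (px + s • d) with hg
    have hgcont : Continuous g := by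
      apply supn_continuous.comp
      continuity
    have hpxr : supn px ≤ r := by
      calc supn px ≤ ‖px‖ := supn_le_norm px
        _ ≤ r := by
            have := hpxK.2
            rwa [Metric.mem_closedBall, dist_zero_right] at this
    have hg0 : g 0 ≤ r + 1 := by
      simp only [hg, zero_smul, add_zero]
      linarith
    set s₂ : ℝ := (r + 1 + supn px) / supn d with hs₂
    have hs₂0 : 0 ≤ s₂ := div_nonneg (by linarith [supn_nonneg px]) hdpos.le
    have hgs₂ : r + 1 ≤ g s₂ := by
      have key : supn (s₂ • d) - supn px ≤ g s₂ := by
        have h1 : supn (s₂ • d) ≤ supn (px + s₂ • d) + supn px := by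
          have e0 : (s₂ • d : EuclideanSpace ℝ (Fin (n + 1))) = (px + s₂ • d) - px := by abel
          have e : (WithLp.equiv 2 (Fin (n + 1) → ℝ)) (s₂ • d)
              = (WithLp.equiv 2 (Fin (n + 1) → ℝ)) (px + s₂ • d)
                - (WithLp.equiv 2 (Fin (n + 1) → ℝ)) px := by
            nth_rewrite 1 [e0]
            rfl
          show ‖(WithLp.equiv 2 (Fin (n + 1) → ℝ)) (s₂ • d)‖ ≤ supn (px + s₂ • d) + supn px
          rw [e]
          exact norm_sub_le _ _
        simp only [hg]; linarith
      have h2 : supn (s₂ • d) = s₂ * supn d := by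
        rw [supn, supn]
        have : (WithLp.equiv 2 (Fin (n + 1) → ℝ)) (s₂ • d)
            = s₂ • (WithLp.equiv 2 (Fin (n + 1) → ℝ)) d := rfl
        rw [this, norm_smul, Real.norm_eq_abs, abs_of_nonneg hs₂0]
      rw [h2, hs₂, div_mul_cancel₀ _ (ne_of_gt hdpos)] at key
      linarith
    obtain ⟨s, hsmem, hgs⟩ : ∃ s ∈ Set.Icc 0 s₂, g s = r + 1 := by
      have := intermediate_value_Icc hs₂0 hgcont.continuousOn (a := 0) (b := s₂)
      have hmem : (r + 1) ∈ Set.Icc (g 0) (g s₂) := ⟨hg0, hgs₂⟩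
      obtain ⟨s, hs, hgs⟩ := this hmem
      exact ⟨s, hs, hgs⟩
    have hx'A : px + s • d ∈ A := hgs
    have hPx' : P (px + s • d) = px := cproj_ray K hKne hKc hKconv x hsmem.1
    refine ⟨px, ⟨px + s • d, hx'A, hPx'⟩, ?_⟩
    have hPy : P y = y := cproj_self K hKne hKc hKconv hyK
    calc dist y px = dist (P y) (P x) := by rw [hPy]
      _ ≤ 1 * dist y x := (cproj_lipschitz K hKne hKc hKconv).dist_le_mul y x
      _ < ε := by rwa [one_mul]
  -- Step 2 : A is compact, so P '' A is compact and closed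
  have hAclosed : IsClosed A := isClosed_eq supn_continuous continuous_const
  have hAbdd : A ⊆ Metric.closedBall 0 ((n + 1) * (r + 1)) := by
    intro x hx
    rw [Metric.mem_closedBall, dist_zero_right]
    calc ‖x‖ ≤ (n + 1) * supn x := norm_le_supn x
      _ = (n + 1) * (r + 1) := by rw [hx]
  have hAcomp : IsCompact A :=
    (isCompact_closedBall _ _).of_isClosed_subset hAclosed hAbdd
  have hPAcomp : IsCompact (P '' A) :=
    hAcomp.image (cproj_lipschitz K hKne hKc hKconv).continuous
  have step2 : closure (P '' A) = P '' A := hPAcomp.isClosed.closure_eq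
  -- Step 3 : μH (P '' A) ≤ μH A
  have step3 : μH[(n : ℝ)] (P '' A) ≤ μH[(n : ℝ)] A := by
    have := (cproj_lipschitz K hKne hKc hKconv).hausdorffMeasure_image_le
      (Nat.cast_nonneg n) A
    simpa using this
  -- Step 4 : A is covered by the faces of the cube
  set Fp : Fin (n + 1) → Set (EuclideanSpace ℝ (Fin (n + 1))) :=
    fun i => {x | x i = r + 1 ∧ ∀ j, |x j| ≤ r + 1} with hFp
  set Fm : Fin (n + 1) → Set (EuclideanSpace ℝ (Fin (n + 1))) :=
    fun i => {x | x i = -(r + 1) ∧ ∀ j, |x j| ≤ r + 1} with hFm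
  have hcover : A ⊆ ⋃ i, (Fp i ∪ Fm i) := by
    intro x hx
    have hxle : ∀ j, |x j| ≤ r + 1 := by
      intro j
      calc |x j| ≤ supn x := coord_le_supn x j
        _ = r + 1 := hx
    have hex : ∃ j, |x j| = r + 1 := by
      by_contra hcon
      push_neg at hcon
      have hlt : ∀ j, |x j| < r + 1 := fun j => lt_of_le_of_ne (hxle j) (hcon j)
      have : supn x < r + 1 := by
        rw [supn]
        rw [pi_norm_lt_iff (by linarith)]
        intro j
        have : ((WithLp.equiv 2 (Fin (n + 1) → ℝ)) x) j = x j := rfl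
        rw [this, Real.norm_eq_abs]
        exact hlt j
      rw [hx] at this
      exact lt_irrefl _ this
    obtain ⟨j, hj⟩ := hex
    rcases abs_eq (by linarith : (0:ℝ) ≤ r + 1) |>.mp hj with h | h
    · exact Set.mem_iUnion.2 ⟨j, Or.inl ⟨h, hxle⟩⟩
    · exact Set.mem_iUnion.2 ⟨j, Or.inr ⟨h, hxle⟩⟩
  have hFB : ∀ i, μH[(n : ℝ)] (Fp i ∪ Fm i)
      ≤ 2 * (ENNReal.ofReal ((Real.sqrt n) ^ n) * ENNReal.ofReal ((2 * (r + 1)) ^ n)) := by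
    intro i
    have h1 := face_bound n i (r + 1) (r + 1) (by linarith)
    have h2 := face_bound n i (-(r + 1)) (r + 1) (by linarith)
    calc μH[(n : ℝ)] (Fp i ∪ Fm i) ≤ μH[(n : ℝ)] (Fp i) + μH[(n : ℝ)] (Fm i) :=
          measure_union_le _ _
      _ ≤ _ := by rw [two_mul]; exact add_le_add h1 h2
  have step4 : μH[(n : ℝ)] A
      ≤ (n + 1 : ℝ≥0∞) * (2 * (ENNReal.ofReal ((Real.sqrt n) ^ n)
          * ENNReal.ofReal ((2 * (r + 1)) ^ n))) := by
    calc μH[(n : ℝ)] A ≤ μH[(n : ℝ)] (⋃ i, (Fp i ∪ Fm i)) := measure_mono hcover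
      _ ≤ ∑' i, μH[(n : ℝ)] (Fp i ∪ Fm i) := measure_iUnion_le _
      _ ≤ ∑' _i : Fin (n + 1), 2 * (ENNReal.ofReal ((Real.sqrt n) ^ n)
            * ENNReal.ofReal ((2 * (r + 1)) ^ n)) := ENNReal.tsum_le_tsum hFB
      _ = (n + 1 : ℝ≥0∞) * _ := by
          rw [tsum_fintype]
          simp [Finset.sum_const, Finset.card_univ, Fintype.card_fin, nsmul_eq_mul]
  -- Combine
  calc μH[(n : ℝ)] (frontier C ∩ Metric.closedBall 0 r)
      ≤ μH[(n : ℝ)] (closure (P '' A)) := measure_mono step1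
    _ = μH[(n : ℝ)] (P '' A) := by rw [step2]
    _ ≤ μH[(n : ℝ)] A := step3
    _ ≤ (n + 1 : ℝ≥0∞) * (2 * (ENNReal.ofReal ((Real.sqrt n) ^ n)
          * ENNReal.ofReal ((2 * (r + 1)) ^ n))) := step4
    _ ≤ ENNReal.ofReal (2 * (n + 1) * (Real.sqrt n) ^ n * 2 ^ n)
          * ENNReal.ofReal ((r + 1) ^ n) := by
        have e1 : ((2 * (r + 1)) ^ n : ℝ) = 2 ^ n * (r + 1) ^ n := mul_pow 2 (r + 1) n
        rw [e1, ENNReal.ofReal_mul (by positivity)]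
        have e2 : (n + 1 : ℝ≥0∞) = ENNReal.ofReal (n + 1) := by
          rw [ENNReal.ofReal_add (Nat.cast_nonneg n) zero_le_one]
          simp
        have e3 : (2 : ℝ≥0∞) = ENNReal.ofReal 2 := by norm_num
        rw [e2, e3, ← ENNReal.ofReal_mul (by positivity), ← ENNReal.ofReal_mul (by positivity),
          ← ENNReal.ofReal_mul (by positivity), ← ENNReal.ofReal_mul (by positivity)]
        rw [← ENNReal.ofReal_mul (by positivity)]
        apply ENNReal.ofReal_le_ofReal
        have hs : (0:ℝ) ≤ (Real.sqrt n) ^ n := by positivity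
        nlinarith [pow_nonneg (by linarith : (0:ℝ) ≤ r + 1) n, hs]

theorem summable_aux (n : ℕ) :
    Summable (fun k : ℕ => ((k : ℝ) + 3) ^ n * Real.exp (-(k : ℝ) / 2)) := by
  set q : ℝ := Real.exp (-(1 / 2 : ℝ)) with hq
  have hq0 : 0 < q := Real.exp_pos _
  have hq1 : ‖q‖ < 1 := by
    rw [Real.norm_eq_abs, abs_of_pos hq0, hq]
    rw [Real.exp_lt_one_iff]
    norm_num
  have hqe : ∀ k : ℕ, Real.exp (-(k : ℝ) / 2) = q ^ k := by
    intro k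
    rw [hq, ← Real.exp_nat_mul]
    congr 1
    ring
  have h1 : Summable (fun k : ℕ => (k : ℝ) ^ n * q ^ k) :=
    summable_pow_mul_geometric_of_norm_lt_one n hq1
  have h2 : Summable (fun k : ℕ => ((k + 3 : ℕ) : ℝ) ^ n * q ^ (k + 3)) :=
    (summable_nat_add_iff 3).2 h1
  have h3 : Summable (fun k : ℕ => (((k + 3 : ℕ) : ℝ) ^ n * q ^ (k + 3)) * (q ^ 3)⁻¹) :=
    h2.mul_right _
  apply h3.congr
  intro k
  rw [hqe k]
  push_cast
  rw [pow_add]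
  field_simp

theorem stmt_6 (n : ℕ) :
    ∃ c : ℝ, ∀ C : Set (EuclideanSpace ℝ (Fin (n + 1))),
      IsClosed C → Convex ℝ C → (interior C).Nonempty →
      ∀ R : ℝ, 1 ≤ R →
        (∫ x in frontier C \ Metric.closedBall 0 R, Real.exp (-‖x‖ ^ 2 / 4) ∂(μH[(n : ℝ)]))
          ≤ c * R ^ n * Real.exp (-R ^ 2 / 4) := by
  classical
  set B : ℝ := 2 * (n + 1) * (Real.sqrt n) ^ n * 2 ^ n with hB
  have hB0 : 0 ≤ B := by positivity
  set S : ℝ := ∑' k : ℕ, ((k : ℝ) + 3) ^ n * Real.exp (-(k : ℝ) / 2) with hS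
  have hS0 : 0 ≤ S := tsum_nonneg (fun k => by positivity)
  refine ⟨B * S, ?_⟩
  intro C hC hconv _hint R hR
  set μ : Measure (EuclideanSpace ℝ (Fin (n + 1))) := μH[(n : ℝ)] with hμ
  set f : EuclideanSpace ℝ (Fin (n + 1)) → ℝ := fun x => Real.exp (-‖x‖ ^ 2 / 4) with hf
  have hfc : Continuous f := by
    apply Real.continuous_exp.comp
    continuity
  have hbound0 : 0 ≤ B * S * R ^ n * Real.exp (-R ^ 2 / 4) := by positivity
  -- rewrite the Bochner integral as a lower Lebesgue integral
  have hint : (∫ x in frontier C \ Metric.closedBall 0 R, f x ∂μ)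
      = (∫⁻ x in frontier C \ Metric.closedBall 0 R, ENNReal.ofReal (f x) ∂μ).toReal := by
    apply integral_eq_lintegral_of_nonneg_ae
    · filter_upwards with x
      exact Real.exp_nonneg _
    · exact hfc.aestronglyMeasurable
  rw [show (∫ x in frontier C \ Metric.closedBall 0 R, Real.exp (-‖x‖ ^ 2 / 4) ∂μH[(n : ℝ)])
      = ∫ x in frontier C \ Metric.closedBall 0 R, f x ∂μ from rfl, hint]
  apply ENNReal.toReal_le_of_le_ofReal hbound0
  -- shell decomposition
  set s : ℕ → Set (EuclideanSpace ℝ (Fin (n + 1))) := fun k =>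
    (frontier C ∩ Metric.closedBall 0 (R + k + 1)) \ Metric.ball 0 (R + k) with hs
  have hsub : frontier C \ Metric.closedBall 0 R ⊆ ⋃ k, s k := by
    intro x hx
    have hxf : x ∈ frontier C := hx.1
    have hxR : R < ‖x‖ := by
      have := hx.2
      rw [Metric.mem_closedBall, dist_zero_right, not_le] at this
      exact this
    set k : ℕ := ⌊‖x‖ - R⌋₊ with hk
    have hk1 : (k : ℝ) ≤ ‖x‖ - R := Nat.floor_le (by linarith)
    have hk2 : ‖x‖ - R < k + 1 := Nat.lt_floor_add_one _
    refine Set.mem_iUnion.2 ⟨k, ⟨⟨hxf, ?_⟩, ?_⟩⟩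
    · rw [Metric.mem_closedBall, dist_zero_right]; linarith
    · rw [Metric.mem_ball, dist_zero_right, not_lt]; linarith
  have hsmeas : ∀ k, MeasurableSet (s k) := by
    intro k
    exact ((isClosed_frontier.measurableSet).inter measurableSet_closedBall).diff
      measurableSet_ball
  -- bound for each shell
  have hshell : ∀ k : ℕ, (∫⁻ x in s k, ENNReal.ofReal (f x) ∂μ)
      ≤ ENNReal.ofReal (Real.exp (-(R + k) ^ 2 / 4))
        * (ENNReal.ofReal B * ENNReal.ofReal ((R + k + 2) ^ n)) := by
    intro k
    have hk0 : (0:ℝ) ≤ (k:ℝ) := Nat.cast_nonneg k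
    have h1 : (∫⁻ x in s k, ENNReal.ofReal (f x) ∂μ)
        ≤ ∫⁻ _x in s k, ENNReal.ofReal (Real.exp (-(R + k) ^ 2 / 4)) ∂μ := by
      apply setLIntegral_mono' (hsmeas k)
      intro x hxk
      apply ENNReal.ofReal_le_ofReal
      apply Real.exp_le_exp.2
      have hxge : R + k ≤ ‖x‖ := by
        have := hxk.2
        rw [Metric.mem_ball, dist_zero_right, not_lt] at this
        exact this
      have h2 : (R + k) ^ 2 ≤ ‖x‖ ^ 2 := by nlinarith [norm_nonneg x]
      linarith
    have h2 : (∫⁻ _x in s k, ENNReal.ofReal (Real.exp (-(R + k) ^ 2 / 4)) ∂μ)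
        = ENNReal.ofReal (Real.exp (-(R + k) ^ 2 / 4)) * μ (s k) := setLIntegral_const _ _
    have h3 : μ (s k) ≤ ENNReal.ofReal B * ENNReal.ofReal ((R + k + 2) ^ n) := by
      have hsk : s k ⊆ frontier C ∩ Metric.closedBall 0 (R + k + 1) := Set.diff_subset
      calc μ (s k) ≤ μ (frontier C ∩ Metric.closedBall 0 (R + k + 1)) := measure_mono hsk
        _ ≤ ENNReal.ofReal B * ENNReal.ofReal ((R + k + 1 + 1) ^ n) :=
            boundary_measure_bound n C hC hconv (R + k + 1) (by linarith)
        _ = ENNReal.ofReal B * ENNReal.ofReal ((R + k + 2) ^ n) := by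
            rw [show R + (k:ℝ) + 1 + 1 = R + k + 2 by ring]
    calc (∫⁻ x in s k, ENNReal.ofReal (f x) ∂μ)
        ≤ ∫⁻ _x in s k, ENNReal.ofReal (Real.exp (-(R + k) ^ 2 / 4)) ∂μ := h1
      _ = ENNReal.ofReal (Real.exp (-(R + k) ^ 2 / 4)) * μ (s k) := h2
      _ ≤ _ := by gcongr
  -- the real pointwise estimate for the series
  have hterm : ∀ k : ℕ, Real.exp (-(R + k) ^ 2 / 4) * (R + k + 2) ^ n
      ≤ (Real.exp (-R ^ 2 / 4) * R ^ n) * (((k : ℝ) + 3) ^ n * Real.exp (-(k : ℝ) / 2)) := by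
    intro k
    have hk0 : (0:ℝ) ≤ (k:ℝ) := Nat.cast_nonneg k
    have he : Real.exp (-(R + k) ^ 2 / 4) ≤ Real.exp (-R ^ 2 / 4) * Real.exp (-(k : ℝ) / 2) := by
      rw [← Real.exp_add]
      apply Real.exp_le_exp.2
      nlinarith
    have hp : (R + k + 2) ^ n ≤ R ^ n * ((k : ℝ) + 3) ^ n := by
      rw [← mul_pow]
      apply pow_le_pow_left₀ (by linarith)
      nlinarith
    calc Real.exp (-(R + k) ^ 2 / 4) * (R + k + 2) ^ n
        ≤ (Real.exp (-R ^ 2 / 4) * Real.exp (-(k : ℝ) / 2)) * (R ^ n * ((k : ℝ) + 3) ^ n) := by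
          apply mul_le_mul he hp (by positivity) (by positivity)
      _ = (Real.exp (-R ^ 2 / 4) * R ^ n) * (((k : ℝ) + 3) ^ n * Real.exp (-(k : ℝ) / 2)) := by
          ring
  -- put everything together
  calc (∫⁻ x in frontier C \ Metric.closedBall 0 R, ENNReal.ofReal (f x) ∂μ)
      ≤ ∫⁻ x in ⋃ k, s k, ENNReal.ofReal (f x) ∂μ := lintegral_mono_set hsub
    _ ≤ ∑' k, ∫⁻ x in s k, ENNReal.ofReal (f x) ∂μ := lintegral_iUnion_le _ _
    _ ≤ ∑' k : ℕ, ENNReal.ofReal (Real.exp (-(R + k) ^ 2 / 4))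
          * (ENNReal.ofReal B * ENNReal.ofReal ((R + k + 2) ^ n)) :=
        ENNReal.tsum_le_tsum hshell
    _ = ENNReal.ofReal B * ∑' k : ℕ, ENNReal.ofReal (Real.exp (-(R + k) ^ 2 / 4) * (R + k + 2) ^ n) := by
        rw [← ENNReal.tsum_mul_left]
        congr 1
        funext k
        rw [ENNReal.ofReal_mul (Real.exp_nonneg _)]
        ring
    _ ≤ ENNReal.ofReal B * ∑' k : ℕ, ENNReal.ofReal ((Real.exp (-R ^ 2 / 4) * R ^ n)
          * (((k : ℝ) + 3) ^ n * Real.exp (-(k : ℝ) / 2))) := by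
        apply mul_le_mul_right
        apply ENNReal.tsum_le_tsum
        intro k
        exact ENNReal.ofReal_le_ofReal (hterm k)
    _ = ENNReal.ofReal B * (ENNReal.ofReal (Real.exp (-R ^ 2 / 4) * R ^ n)
          * ∑' k : ℕ, ENNReal.ofReal (((k : ℝ) + 3) ^ n * Real.exp (-(k : ℝ) / 2))) := by
        congr 1
        rw [← ENNReal.tsum_mul_left]
        congr 1
        funext k
        rw [ENNReal.ofReal_mul (by positivity)]
    _ = ENNReal.ofReal B * (ENNReal.ofReal (Real.exp (-R ^ 2 / 4) * R ^ n) * ENNReal.ofReal S) := by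
        congr 1
        congr 1
        rw [hS, ENNReal.ofReal_tsum_of_nonneg (fun k => by positivity) (summable_aux n)]
    _ ≤ ENNReal.ofReal (B * S * R ^ n * Real.exp (-R ^ 2 / 4)) := by
        rw [← ENNReal.ofReal_mul (by positivity : (0:ℝ) ≤ Real.exp (-R ^ 2 / 4) * R ^ n),
          ← ENNReal.ofReal_mul hB0]
        apply ENNReal.ofReal_le_ofReal
        apply le_of_eq
        ring
end

section
/- If C_k is a sequence of nonempty closed convex subsets of ℝ^{n+1} converging to a closed convex set C in the topology of locally uniform convergence of distance functions, and K is a compact subset of the interior of C, then K ⊆ interior(C_k) for all sufficiently large k. -/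
open Metric Filter

theorem stmt_7 {n : ℕ} (C : ℕ → Set (EuclideanSpace ℝ (Fin (n + 1))))
    (hne : ∀ k, (C k).Nonempty) (hcl : ∀ k, IsClosed (C k)) (hconv : ∀ k, Convex ℝ (C k))
    (D : Set (EuclideanSpace ℝ (Fin (n + 1)))) (hDcl : IsClosed D) (hDconv : Convex ℝ D)
    (hlim : TendstoLocallyUniformly (fun k x => Metric.infDist x (C k))
      (fun x => Metric.infDist x D) Filter.atTop)
    (K : Set (EuclideanSpace ℝ (Fin (n + 1)))) (hK : IsCompact K) (hKD : K ⊆ interior D) :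
    ∀ᶠ k in Filter.atTop, K ⊆ interior (C k) := by
  rcases K.eq_empty_or_nonempty with rfl | hKne
  · exact Filter.Eventually.of_forall fun k => Set.empty_subset _
  -- get ε > 0 with cthickening (2ε) K ⊆ D
  obtain ⟨δ, hδpos, hδsub⟩ := hK.exists_cthickening_subset_open isOpen_interior hKD
  set ε : ℝ := δ / 2 with hε
  have hεpos : 0 < ε := by positivity
  set T : Set (EuclideanSpace ℝ (Fin (n + 1))) := Metric.cthickening (2 * ε) K with hT
  have hTD : T ⊆ D := by
    have : Metric.cthickening (2 * ε) K ⊆ Metric.cthickening δ K :=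
      Metric.cthickening_mono (by rw [hε]; linarith) K
    exact fun x hx => interior_subset (hδsub (this hx))
  have hTcpt : IsCompact T := hK.cthickening
  -- uniform convergence on T
  have huT : TendstoUniformlyOn (fun k x => Metric.infDist x (C k))
      (fun x => Metric.infDist x D) atTop T :=
    (tendstoLocallyUniformly_iff_forall_isCompact.mp hlim) T hTcpt
  rw [Metric.tendstoUniformlyOn_iff] at huT
  have hev := huT (ε / 2) (by positivity)
  filter_upwards [hev] with k hk
  -- on T, infDist · (C k) < ε/2
  have hsmall : ∀ y ∈ T, Metric.infDist y (C k) < ε / 2 := by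
    intro y hy
    have h1 := hk y hy
    have h2 : Metric.infDist y D = 0 := Metric.infDist_zero_of_mem (hTD hy)
    rw [h2, dist_comm, Real.dist_eq, sub_zero, abs_of_nonneg Metric.infDist_nonneg] at h1
    exact h1
  intro x hx
  -- suffices ball x ε ⊆ C k
  have hball : Metric.ball x ε ⊆ C k := by
    intro z hz
    by_contra hzC
    -- projection of z onto C k
    obtain ⟨p, hp, hpd⟩ := (hcl k).exists_infDist_eq_dist (hne k) z
    have hdpos : 0 < Metric.infDist z (C k) :=
      ((hcl k).notMem_iff_infDist_pos (hne k)).mp hzC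
    set v := z - p with hv
    have hvnorm : ‖v‖ = Metric.infDist z (C k) := by
      rw [hv, ← dist_eq_norm, ← hpd]
    have hvpos : 0 < ‖v‖ := hvnorm ▸ hdpos
    -- supporting inequality
    have hiInf : ‖z - p‖ = ⨅ w : C k, ‖z - w‖ := by
      rw [← dist_eq_norm, ← hpd, Metric.infDist_eq_iInf]
      simp only [dist_eq_norm]
    have hsupp : ∀ w ∈ C k, inner ℝ (z - p) (w - p) ≤ (0 : ℝ) :=
      (norm_eq_iInf_iff_real_inner_le_zero (hconv k) hp).mp hiInf
    -- auxiliary point y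
    set y := z + (ε / ‖v‖) • v with hy
    have hyz : dist y z = ε := by
      rw [hy, dist_eq_norm, add_sub_cancel_left, norm_smul, Real.norm_eq_abs,
        abs_of_nonneg (by positivity), div_mul_cancel₀ _ (ne_of_gt hvpos)]
    have hyT : y ∈ T := by
      apply Metric.mem_cthickening_of_dist_le y x (2 * ε) K hx
      calc dist y x ≤ dist y z + dist z x := dist_triangle y z x
        _ ≤ ε + ε := by
            have := (Metric.mem_ball.mp hz).le
            rw [hyz]; linarith
        _ = 2 * ε := by ring
    -- lower bound on infDist y (C k)
    have hlow : ε ≤ Metric.infDist y (C k) := by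
      rw [Metric.infDist_eq_iInf]
      have : Nonempty (C k) := (hne k).to_subtype
      apply le_ciInf
      intro w
      have hw : (w : EuclideanSpace ℝ (Fin (n + 1))) ∈ C k := w.2
      have hinner : inner ℝ v (y - w) ≤ ‖v‖ * dist y w := by
        calc inner ℝ v (y - (w : EuclideanSpace ℝ (Fin (n + 1)))) ≤ ‖v‖ * ‖y - w‖ :=
              real_inner_le_norm _ _
          _ = ‖v‖ * dist y w := by rw [dist_eq_norm]
      have hexp : inner ℝ v (y - (w : EuclideanSpace ℝ (Fin (n + 1))))
          = (ε / ‖v‖) * (‖v‖ ^ 2) + ‖v‖ ^ 2 - inner ℝ (z - p) ((w : EuclideanSpace ℝ (Fin (n + 1))) - p) := by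
        have hyw : y - (w : EuclideanSpace ℝ (Fin (n + 1)))
            = (ε / ‖v‖) • v + v - ((w : EuclideanSpace ℝ (Fin (n + 1))) - p) := by
          rw [hy, hv]; abel
        rw [hyw, inner_sub_right, inner_add_right, real_inner_smul_right,
          real_inner_self_eq_norm_sq, hv]
      have hsupp' := hsupp w hw
      have h1 : ε * ‖v‖ + ‖v‖ ^ 2 ≤ inner ℝ v (y - (w : EuclideanSpace ℝ (Fin (n + 1)))) := by
        rw [hexp]
        have h2 : (ε / ‖v‖) * (‖v‖ ^ 2) = ε * ‖v‖ := by
          field_simp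
        nlinarith
      have h3 : ε * ‖v‖ + ‖v‖ ^ 2 ≤ ‖v‖ * dist y w := le_trans h1 hinner
      nlinarith
    have := hsmall y hyT
    linarith
  exact interior_maximal hball Metric.isOpen_ball (Metric.mem_ball_self hεpos)
end

section
/- Every closed convex set C ⊆ ℝ^{n+1} that is symmetric under point reflection (C = −C) and noncompact contains a full line through the origin; consequently C splits as a product: there is a linear subspace L of dimension ≥ 1 and a convex set C' in the orthogonal complement with C = L ⊕ C' (i.e., C = {v + w : v ∈ L, w ∈ C'}). -/
open Pointwise

theorem stmt_13 {n : ℕ} (C : Set (EuclideanSpace ℝ (Fin (n + 1))))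
    (hne : C.Nonempty) (hcl : IsClosed C) (hconv : Convex ℝ C)
    (hsym : C = -C) (hnc : ¬ IsCompact C) :
    (∃ b : EuclideanSpace ℝ (Fin (n + 1)), b ≠ 0 ∧ ∀ σ : ℝ, σ • b ∈ C) ∧
      ∃ (L : Submodule ℝ (EuclideanSpace ℝ (Fin (n + 1))))
        (C' : Set (EuclideanSpace ℝ (Fin (n + 1)))),
        1 ≤ Module.finrank ℝ L ∧ C' ⊆ (Lᗮ : Set (EuclideanSpace ℝ (Fin (n + 1)))) ∧
        Convex ℝ C' ∧ C = (L : Set (EuclideanSpace ℝ (Fin (n + 1)))) + C' := by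
  -- negation closure and 0 ∈ C
  have hneg : ∀ y ∈ C, -y ∈ C := by
    intro y hy
    rw [hsym]
    exact Set.neg_mem_neg.mpr hy
  obtain ⟨x0, hx0⟩ := hne
  have h0 : (0 : EuclideanSpace ℝ (Fin (n + 1))) ∈ C := by
    have := hconv hx0 (hneg x0 hx0) (by norm_num : (0:ℝ) ≤ 1/2)
      (by norm_num : (0:ℝ) ≤ 1/2) (by norm_num)
    simpa using this
  -- C is unbounded
  have hub : ∀ R : ℝ, ∃ y ∈ C, R < ‖y‖ := by
    by_contra h
    push_neg at h
    obtain ⟨R, hR⟩ := h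
    exact hnc (Metric.isCompact_of_isClosed_isBounded hcl
      (isBounded_iff_forall_norm_le.mpr ⟨R, hR⟩))
  choose x hxC hxn using fun k : ℕ => hub (k : ℝ)
  have hxne : ∀ k, ‖x k‖ ≠ 0 := by
    intro k h
    have := hxn k
    rw [h] at this
    exact absurd this (by positivity : (0:ℝ) ≤ (k:ℝ)).not_gt
  -- normalized sequence on the unit sphere
  set u : ℕ → EuclideanSpace ℝ (Fin (n + 1)) := fun k => ‖x k‖⁻¹ • x k with hu
  have huS : ∀ k, u k ∈ Metric.sphere (0 : EuclideanSpace ℝ (Fin (n + 1))) 1 := by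
    intro k
    rw [mem_sphere_zero_iff_norm, hu]
    simp [norm_smul, abs_of_nonneg (inv_nonneg.mpr (norm_nonneg _)),
      inv_mul_cancel₀ (hxne k)]
  obtain ⟨b, hbS, φ, hφ, hub'⟩ := (isCompact_sphere (0 : EuclideanSpace ℝ (Fin (n + 1))) 1).tendsto_subseq huS
  have hbnorm : ‖b‖ = 1 := mem_sphere_zero_iff_norm.mp hbS
  have hbne : b ≠ 0 := by
    intro h; rw [h, norm_zero] at hbnorm; norm_num at hbnorm
  -- nonnegative multiples of b are in C
  have hpos : ∀ σ : ℝ, 0 ≤ σ → σ • b ∈ C := by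
    intro σ hσ
    have htend : Filter.Tendsto (fun k => σ • u (φ k)) Filter.atTop (nhds (σ • b)) :=
      hub'.const_smul σ
    refine hcl.mem_of_tendsto htend ?_
    filter_upwards [Filter.eventually_ge_atTop ⌈σ⌉₊] with k hk
    have hσle : σ ≤ ‖x (φ k)‖ := by
      calc σ ≤ (⌈σ⌉₊ : ℝ) := Nat.le_ceil σ
        _ ≤ (k : ℝ) := by exact_mod_cast hk
        _ ≤ (φ k : ℝ) := by exact_mod_cast hφ.le_apply
        _ ≤ ‖x (φ k)‖ := (hxn (φ k)).le
    have ht0 : 0 ≤ σ * ‖x (φ k)‖⁻¹ := by positivity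
    have ht1 : σ * ‖x (φ k)‖⁻¹ ≤ 1 := by
      rw [mul_inv_le_iff₀ (lt_of_le_of_lt (by positivity) (hxn (φ k))), one_mul]
      exact hσle
    have : (σ * ‖x (φ k)‖⁻¹) • x (φ k) ∈ C :=
      hconv.smul_mem_of_zero_mem h0 (hxC (φ k)) ⟨ht0, ht1⟩
    simpa [hu, smul_smul] using this
  have hall : ∀ σ : ℝ, σ • b ∈ C := by
    intro σ
    rcases le_or_gt 0 σ with h | h
    · exact hpos σ h
    · have := hneg _ (hpos (-σ) (by linarith))
      simpa using this
  -- C absorbs translation along b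
  have hline : ∀ z ∈ C, ∀ t : ℝ, z + t • b ∈ C := by
    intro z hz t
    have htend : Filter.Tendsto
        (fun m : ℕ => (1 - 1 / ((m : ℝ) + 1)) • z + t • b) Filter.atTop
        (nhds (z + t • b)) := by
      have h1 : Filter.Tendsto (fun m : ℕ => (1 - 1 / ((m : ℝ) + 1))) Filter.atTop
          (nhds 1) := by
        have := tendsto_one_div_add_atTop_nhds_zero_nat (𝕜 := ℝ)
        simpa using (tendsto_const_nhds.sub this)
      have := (h1.smul_const z).add (tendsto_const_nhds (x := t • b))
      simpa using this
    refine hcl.mem_of_tendsto htend (Filter.Eventually.of_forall fun m => ?_)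
    have hm : (0:ℝ) < (m : ℝ) + 1 := by positivity
    have hmem : (t * ((m : ℝ) + 1)) • b ∈ C := hall _
    have h01 : (0:ℝ) ≤ 1 / ((m : ℝ) + 1) := by positivity
    have h1' : 1 / ((m : ℝ) + 1) ≤ 1 := by
      rw [div_le_one hm]; linarith
    have := hconv (a := 1 - 1 / ((m : ℝ) + 1)) (b := 1 / ((m : ℝ) + 1)) hz hmem
      (by linarith) h01 (by ring)
    have heq : (1 / ((m : ℝ) + 1)) • ((t * ((m : ℝ) + 1)) • b) = t • b := by
      rw [smul_smul]
      congr 1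
      field_simp
    rw [heq] at this
    exact this
  -- the subspace and the complement
  set L : Submodule ℝ (EuclideanSpace ℝ (Fin (n + 1))) := Submodule.span ℝ {b} with hL
  have hLrank : Module.finrank ℝ L = 1 := finrank_span_singleton hbne
  refine ⟨⟨b, hbne, hall⟩, L, C ∩ (Lᗮ : Set (EuclideanSpace ℝ (Fin (n + 1)))), by rw [hLrank], Set.inter_subset_right,
    hconv.inter (Lᗮ).convex, ?_⟩
  ext z
  constructor
  · intro hz
    set p : L := Submodule.orthogonalProjectionOnto L z with hp
    obtain ⟨t, ht⟩ := Submodule.mem_span_singleton.mp p.2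
    refine Set.mem_add.mpr ⟨(p : EuclideanSpace ℝ (Fin (n + 1))), p.2, z - (p : EuclideanSpace ℝ (Fin (n + 1))), ⟨?_, L.sub_starProjection_mem_orthogonal z⟩, by abel⟩
    have : z + (-t) • b ∈ C := hline z hz (-t)
    rw [neg_smul, ← sub_eq_add_neg, ht] at this
    exact this
  · intro hz
    obtain ⟨v, hv, c, ⟨hcC, _⟩, rfl⟩ := Set.mem_add.mp hz
    obtain ⟨t, ht⟩ := Submodule.mem_span_singleton.mp hv
    subst ht
    have h := hline c hcC t
    have heq : t • b + c = c + t • b := add_comm _ _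
    exact heq ▸ h
end

section
/- Let g, h : [τ_0, τ_1] → ℝ with h nonnegative, nonincreasing, differentiable, g differentiable, and suppose −g'(τ) ≤ √(−½ d(h(τ)²)/dτ) for all τ. Then g(τ_0) − g(τ_1) ≤ (1/√2) · h(τ_0) · √(τ_1 − τ_0). -/
theorem stmt_19 (τ₀ τ₁ : ℝ) (hτ : τ₀ < τ₁) (g h g' h' : ℝ → ℝ)
    (hg : ∀ τ ∈ Set.Icc τ₀ τ₁, HasDerivAt g (g' τ) τ)
    (hh : ∀ τ ∈ Set.Icc τ₀ τ₁, HasDerivAt h (h' τ) τ)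
    (hpos : ∀ τ ∈ Set.Icc τ₀ τ₁, 0 ≤ h τ)
    (hdec : ∀ τ ∈ Set.Icc τ₀ τ₁, h' τ ≤ 0)
    (hineq : ∀ τ ∈ Set.Icc τ₀ τ₁, -g' τ ≤ Real.sqrt (-(h τ * h' τ))) :
    g τ₀ - g τ₁ ≤ (1 / Real.sqrt 2) * h τ₀ * Real.sqrt (τ₁ - τ₀) := by
  -- Key step: for every a > 0,
  -- g τ₀ - g τ₁ ≤ a*(τ₁-τ₀)/2 + (h τ₀)^2/(4*a)
  have key : ∀ a : ℝ, 0 < a →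
      g τ₀ - g τ₁ ≤ a * (τ₁ - τ₀) / 2 + (h τ₀)^2 / (4*a) := by
    intro a ha
    set F : ℝ → ℝ := fun τ => g τ + a * τ / 2 - (h τ)^2 / (4*a) with hF
    have hFd : ∀ τ ∈ Set.Icc τ₀ τ₁,
        HasDerivAt F (g' τ + a / 2 - h τ * h' τ / (2*a)) τ := by
      intro τ hτm
      have h1 : HasDerivAt (fun τ : ℝ => a * τ / 2) (a / 2) τ := by
        simpa using ((hasDerivAt_id τ).const_mul a).div_const 2
      have h2 : HasDerivAt (fun τ => (h τ)^2 / (4*a)) (h τ * h' τ / (2*a)) τ := by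
        have := ((hh τ hτm).fun_pow 2).div_const (4*a)
        convert this using 1
        · rfl
        · rfl
        norm_num only
        ring
      exact ((hg τ hτm).add h1).sub h2
    have hderiv_nonneg : ∀ τ ∈ Set.Icc τ₀ τ₁,
        0 ≤ g' τ + a / 2 - h τ * h' τ / (2*a) := by
      intro τ hτm
      have h1 := hineq τ hτm
      have hx : (0:ℝ) ≤ a := ha.le
      have hy : 0 ≤ -(h τ * h' τ) / a :=
        div_nonneg (by nlinarith [hpos τ hτm, hdec τ hτm]) hx
      set y := -(h τ * h' τ) / a with hydef
      have hprod : -(h τ * h' τ) = a * y := by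
        rw [hydef]; field_simp
      have hs : Real.sqrt (a * y) ≤ (a + y) / 2 := by
        rw [Real.sqrt_mul hx]
        nlinarith [sq_nonneg (Real.sqrt a - Real.sqrt y),
          Real.sq_sqrt hx, Real.sq_sqrt hy, Real.sqrt_nonneg a, Real.sqrt_nonneg y]
      rw [hprod] at h1
      have h2 : -g' τ ≤ (a + y) / 2 := h1.trans hs
      have hh2 : y = - (h τ * h' τ) / a := hydef
      have ha' : a ≠ 0 := ne_of_gt ha
      have : y / 2 = - (h τ * h' τ / (2*a)) := by
        rw [hh2, neg_div, neg_div, div_div, mul_comm a 2]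
      nlinarith [h2, this]
    have hmono : MonotoneOn F (Set.Icc τ₀ τ₁) := by
      apply monotoneOn_of_deriv_nonneg (convex_Icc τ₀ τ₁)
      · exact fun τ hτm => (hFd τ hτm).continuousAt.continuousWithinAt
      · intro τ hτm
        rw [interior_Icc] at hτm
        exact (hFd τ (Set.mem_Icc_of_Ioo hτm)).differentiableAt.differentiableWithinAt
      · intro τ hτm
        rw [interior_Icc] at hτm
        rw [(hFd τ (Set.mem_Icc_of_Ioo hτm)).deriv]
        exact hderiv_nonneg τ (Set.mem_Icc_of_Ioo hτm)
    have := hmono (Set.left_mem_Icc.mpr hτ.le) (Set.right_mem_Icc.mpr hτ.le) hτ.le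
    simp only [hF] at this
    have hh1 : 0 ≤ (h τ₁)^2 / (4*a) := div_nonneg (sq_nonneg _) (by linarith)
    nlinarith [this]
  have hΔ : 0 < τ₁ - τ₀ := by linarith
  have hsΔ : 0 < Real.sqrt (τ₁ - τ₀) := Real.sqrt_pos.mpr hΔ
  have hs2 : 0 < Real.sqrt 2 := Real.sqrt_pos.mpr (by norm_num)
  have hsq2 : Real.sqrt 2 ^ 2 = 2 := Real.sq_sqrt (by norm_num)
  have hsqΔ : Real.sqrt (τ₁ - τ₀) ^ 2 = τ₁ - τ₀ := Real.sq_sqrt hΔ.le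
  have hH : 0 ≤ h τ₀ := hpos τ₀ (Set.left_mem_Icc.mpr hτ.le)
  rcases eq_or_lt_of_le hH with hH0 | hHpos
  · -- h τ₀ = 0 : show g τ₀ - g τ₁ ≤ 0
    have : g τ₀ - g τ₁ ≤ 0 := by
      by_contra hc
      push_neg at hc
      have hε : 0 < (g τ₀ - g τ₁) / (τ₁ - τ₀) := div_pos hc hΔ
      have := key ((g τ₀ - g τ₁) / (τ₁ - τ₀)) hε
      rw [← hH0] at this
      have : g τ₀ - g τ₁ ≤ (g τ₀ - g τ₁) / 2 := by
        field_simp at this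
        nlinarith
      linarith
    calc g τ₀ - g τ₁ ≤ 0 := this
      _ ≤ (1 / Real.sqrt 2) * h τ₀ * Real.sqrt (τ₁ - τ₀) := by
        rw [← hH0]; simp
  · -- h τ₀ > 0 : use the optimal a
    have ha : 0 < h τ₀ / (Real.sqrt 2 * Real.sqrt (τ₁ - τ₀)) :=
      div_pos hHpos (mul_pos hs2 hsΔ)
    have hkey := key _ ha
    obtain ⟨s, hsdef⟩ : ∃ s, Real.sqrt (τ₁ - τ₀) = s := ⟨_, rfl⟩
    obtain ⟨r, hrdef⟩ : ∃ r, Real.sqrt 2 = r := ⟨_, rfl⟩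
    rw [hsdef] at hsΔ hsqΔ
    rw [hrdef] at hs2 hsq2
    rw [hsdef, hrdef] at hkey ⊢
    rw [← hsqΔ] at hkey
    have hs0 : s ≠ 0 := ne_of_gt hsΔ
    have hr0 : r ≠ 0 := ne_of_gt hs2
    have hH0 : h τ₀ ≠ 0 := ne_of_gt hHpos
    have heq : h τ₀ / (r * s) * s ^ 2 / 2 + h τ₀ ^ 2 / (4 * (h τ₀ / (r * s)))
        = 1 / r * h τ₀ * s := by
      field_simp
      linear_combination 2 * hsq2
    linarith [heq ▸ hkey]
end
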